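/- The map X : ℝ² → ℝ², X(a₁,a₂) = (X₁(a₁,a₂), X₂(a₁,a₂)), is differentiable, and for every (a₁,a₂) ∈ ℝ² the absolute value of the determinant of its Jacobian matrix at (a₁,a₂) equals 4π²·|S_ρ(a₁,a₂)|. -/

import Mathlib

open Real

noncomputable section

/-- `X₁` for `G₂`. -/
def X1 (a : ℝ × ℝ) : ℝ :=
  2 * (Real.cos (2 * π * a.1) + Real.cos (2 * π * (a.1 - 3 * a.2)) +
    Real.cos (2 * π * (2 * a.1 - 3 * a.2)))

/-- `X₂` for `G₂`. -/
def X2 (a : ℝ × ℝ) : ℝ :=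
  2 * (Real.cos (2 * π * a.2) + Real.cos (2 * π * (a.1 - a.2)) +
    Real.cos (2 * π * (a.1 - 2 * a.2)))

/-- The `X`-transform of `G₂`. -/
def Xmap (a : ℝ × ℝ) : ℝ × ℝ := (X1 a, X2 a)

/-- The lowest antisymmetric orbit function `S_ρ` of `G₂`. -/
def Srho (a : ℝ × ℝ) : ℝ :=
  2 * (Real.cos (2 * π * (a.1 + a.2)) - Real.cos (2 * π * (-a.1 + 4 * a.2)) -
    Real.cos (2 * π * (2 * a.1 - a.2)) + Real.cos (2 * π * (3 * a.1 - 4 * a.2)) +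
    Real.cos (2 * π * (-2 * a.1 + 5 * a.2)) - Real.cos (2 * π * (-3 * a.1 + 5 * a.2)))

/-- `∂X₁/∂a₁`. -/
def PP (a : ℝ × ℝ) : ℝ :=
  -4*π*(Real.sin (2*π*a.1) + Real.sin (2*π*(a.1-3*a.2)) + 2*Real.sin (2*π*(2*a.1-3*a.2)))

/-- `∂X₁/∂a₂`. -/
def QQ (a : ℝ × ℝ) : ℝ :=
  12*π*(Real.sin (2*π*(a.1-3*a.2)) + Real.sin (2*π*(2*a.1-3*a.2)))

/-- `∂X₂/∂a₁`. -/
def RR (a : ℝ × ℝ) : ℝ :=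
  -4*π*(Real.sin (2*π*(a.1-a.2)) + Real.sin (2*π*(a.1-2*a.2)))

/-- `∂X₂/∂a₂`. -/
def SS (a : ℝ × ℝ) : ℝ :=
  -4*π*(Real.sin (2*π*a.2) - Real.sin (2*π*(a.1-a.2)) - 2*Real.sin (2*π*(a.1-2*a.2)))

/-- The Jacobian of `Xmap` as a continuous linear map. -/
def Lmap (a : ℝ × ℝ) : (ℝ × ℝ) →L[ℝ] (ℝ × ℝ) :=
  ((PP a) • ContinuousLinearMap.fst ℝ ℝ ℝ + (QQ a) • ContinuousLinearMap.snd ℝ ℝ ℝ).prod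
    ((RR a) • ContinuousLinearMap.fst ℝ ℝ ℝ + (SS a) • ContinuousLinearMap.snd ℝ ℝ ℝ)

lemma hX1 (a : ℝ × ℝ) :
    HasFDerivAt X1 ((PP a) • ContinuousLinearMap.fst ℝ ℝ ℝ +
      (QQ a) • ContinuousLinearMap.snd ℝ ℝ ℝ) a := by
  have l1 : HasFDerivAt (fun p : ℝ × ℝ => 2*π*p.1) ((2*π) • ContinuousLinearMap.fst ℝ ℝ ℝ) a :=
    (hasFDerivAt_fst).const_mul (2*π)
  have l2 : HasFDerivAt (fun p : ℝ × ℝ => 2*π*(p.1 - 3*p.2))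
      ((2*π) • (ContinuousLinearMap.fst ℝ ℝ ℝ - (3:ℝ) • ContinuousLinearMap.snd ℝ ℝ ℝ)) a :=
    (hasFDerivAt_fst.sub ((hasFDerivAt_snd).const_mul 3)).const_mul (2*π)
  have l3 : HasFDerivAt (fun p : ℝ × ℝ => 2*π*(2*p.1 - 3*p.2))
      ((2*π) • ((2:ℝ) • ContinuousLinearMap.fst ℝ ℝ ℝ - (3:ℝ) • ContinuousLinearMap.snd ℝ ℝ ℝ)) a :=
    ((hasFDerivAt_fst.const_mul 2).sub ((hasFDerivAt_snd).const_mul 3)).const_mul (2*π)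
  have c1 := (Real.hasDerivAt_cos (2*π*a.1)).comp_hasFDerivAt a l1
  have c2 := (Real.hasDerivAt_cos (2*π*(a.1-3*a.2))).comp_hasFDerivAt a l2
  have c3 := (Real.hasDerivAt_cos (2*π*(2*a.1-3*a.2))).comp_hasFDerivAt a l3
  have h := ((c1.add c2).add c3).const_mul 2
  refine h.congr_fderiv ?_
  refine ContinuousLinearMap.ext fun v => ?_
  simp [PP, QQ]
  ring

lemma hX2 (a : ℝ × ℝ) :
    HasFDerivAt X2 ((RR a) • ContinuousLinearMap.fst ℝ ℝ ℝ +
      (SS a) • ContinuousLinearMap.snd ℝ ℝ ℝ) a := by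
  have l1 : HasFDerivAt (fun p : ℝ × ℝ => 2*π*p.2) ((2*π) • ContinuousLinearMap.snd ℝ ℝ ℝ) a :=
    (hasFDerivAt_snd).const_mul (2*π)
  have l2 : HasFDerivAt (fun p : ℝ × ℝ => 2*π*(p.1 - p.2))
      ((2*π) • (ContinuousLinearMap.fst ℝ ℝ ℝ - ContinuousLinearMap.snd ℝ ℝ ℝ)) a :=
    (hasFDerivAt_fst.sub hasFDerivAt_snd).const_mul (2*π)
  have l3 : HasFDerivAt (fun p : ℝ × ℝ => 2*π*(p.1 - 2*p.2))
      ((2*π) • (ContinuousLinearMap.fst ℝ ℝ ℝ - (2:ℝ) • ContinuousLinearMap.snd ℝ ℝ ℝ)) a :=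
    (hasFDerivAt_fst.sub ((hasFDerivAt_snd).const_mul 2)).const_mul (2*π)
  have c1 := (Real.hasDerivAt_cos (2*π*a.2)).comp_hasFDerivAt a l1
  have c2 := (Real.hasDerivAt_cos (2*π*(a.1-a.2))).comp_hasFDerivAt a l2
  have c3 := (Real.hasDerivAt_cos (2*π*(a.1-2*a.2))).comp_hasFDerivAt a l3
  have h := ((c1.add c2).add c3).const_mul 2
  refine h.congr_fderiv ?_
  refine ContinuousLinearMap.ext fun v => ?_
  simp [RR, SS]
  ring

lemma hXmap (a : ℝ × ℝ) : HasFDerivAt Xmap (Lmap a) a :=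
  (hX1 a).prodMk (hX2 a)

lemma det_formula (p q r s : ℝ) :
    ((p • ContinuousLinearMap.fst ℝ ℝ ℝ + q • ContinuousLinearMap.snd ℝ ℝ ℝ).prod
      (r • ContinuousLinearMap.fst ℝ ℝ ℝ + s • ContinuousLinearMap.snd ℝ ℝ ℝ)).det
      = p * s - q * r := by
  have h : ((p • ContinuousLinearMap.fst ℝ ℝ ℝ + q • ContinuousLinearMap.snd ℝ ℝ ℝ).prod
      (r • ContinuousLinearMap.fst ℝ ℝ ℝ + s • ContinuousLinearMap.snd ℝ ℝ ℝ)).det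
      = LinearMap.det (((p • ContinuousLinearMap.fst ℝ ℝ ℝ + q • ContinuousLinearMap.snd ℝ ℝ ℝ).prod
      (r • ContinuousLinearMap.fst ℝ ℝ ℝ + s • ContinuousLinearMap.snd ℝ ℝ ℝ)) :
        (ℝ×ℝ) →ₗ[ℝ] (ℝ×ℝ)) := rfl
  rw [h, ← LinearMap.det_toMatrix (Module.Basis.finTwoProd ℝ), Matrix.det_fin_two]
  simp [LinearMap.toMatrix_apply, Module.Basis.finTwoProd_zero, Module.Basis.finTwoProd_one]

lemma sinmul (A B : ℝ) : Real.sin A * Real.sin B = (Real.cos (A - B) - Real.cos (A + B))/2 := by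
  rw [Real.cos_sub, Real.cos_add]; ring

lemma key (x y : ℝ) :
    (-4*π*(Real.sin (2*π*x) + Real.sin (2*π*(x-3*y)) + 2*Real.sin (2*π*(2*x-3*y)))) *
      (-4*π*(Real.sin (2*π*y) - Real.sin (2*π*(x-y)) - 2*Real.sin (2*π*(x-2*y)))) -
    (12*π*(Real.sin (2*π*(x-3*y)) + Real.sin (2*π*(2*x-3*y)))) *
      (-4*π*(Real.sin (2*π*(x-y)) + Real.sin (2*π*(x-2*y)))) =
    -(4*π^2) * (2 * (Real.cos (2*π*(x+y)) - Real.cos (2*π*(-x+4*y)) -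
      Real.cos (2*π*(2*x-y)) + Real.cos (2*π*(3*x-4*y)) +
      Real.cos (2*π*(-2*x+5*y)) - Real.cos (2*π*(-3*x+5*y)))) := by
  have e1 : Real.sin (2*π*x) * Real.sin (2*π*y)
      = (Real.cos (2*π*(x-y)) - Real.cos (2*π*(x+y)))/2 := by
    rw [sinmul]; ring_nf
  have e2 : Real.sin (2*π*x) * Real.sin (2*π*(x-y))
      = (Real.cos (2*π*y) - Real.cos (2*π*(2*x-y)))/2 := by
    rw [sinmul, show 2*π*x - 2*π*(x-y) = 2*π*y by ring]; ring_nf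
  have e3 : Real.sin (2*π*x) * Real.sin (2*π*(x-2*y))
      = (Real.cos (2*π*(2*y)) - Real.cos (2*π*(2*x-2*y)))/2 := by
    rw [sinmul, show 2*π*x - 2*π*(x-2*y) = 2*π*(2*y) by ring]; ring_nf
  have e4 : Real.sin (2*π*(x-3*y)) * Real.sin (2*π*y)
      = (Real.cos (2*π*(-x+4*y)) - Real.cos (2*π*(x-2*y)))/2 := by
    rw [sinmul, show 2*π*(x-3*y) - 2*π*y = -(2*π*(-x+4*y)) by ring, Real.cos_neg]; ring_nf
  have e5 : Real.sin (2*π*(x-3*y)) * Real.sin (2*π*(x-y))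
      = (Real.cos (2*π*(2*y)) - Real.cos (2*π*(2*x-4*y)))/2 := by
    rw [sinmul, show 2*π*(x-3*y) - 2*π*(x-y) = -(2*π*(2*y)) by ring, Real.cos_neg]; ring_nf
  have e6 : Real.sin (2*π*(x-3*y)) * Real.sin (2*π*(x-2*y))
      = (Real.cos (2*π*y) - Real.cos (2*π*(-2*x+5*y)))/2 := by
    rw [sinmul, show 2*π*(x-3*y) - 2*π*(x-2*y) = -(2*π*y) by ring, Real.cos_neg,
      show 2*π*(x-3*y) + 2*π*(x-2*y) = -(2*π*(-2*x+5*y)) by ring, Real.cos_neg]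
  have e7 : Real.sin (2*π*(2*x-3*y)) * Real.sin (2*π*y)
      = (Real.cos (2*π*(2*x-4*y)) - Real.cos (2*π*(2*x-2*y)))/2 := by
    rw [sinmul, show 2*π*(2*x-3*y) - 2*π*y = 2*π*(2*x-4*y) by ring]; ring_nf
  have e8 : Real.sin (2*π*(2*x-3*y)) * Real.sin (2*π*(x-y))
      = (Real.cos (2*π*(x-2*y)) - Real.cos (2*π*(3*x-4*y)))/2 := by
    rw [sinmul, show 2*π*(2*x-3*y) - 2*π*(x-y) = 2*π*(x-2*y) by ring]; ring_nf
  have e9 : Real.sin (2*π*(2*x-3*y)) * Real.sin (2*π*(x-2*y))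
      = (Real.cos (2*π*(x-y)) - Real.cos (2*π*(-3*x+5*y)))/2 := by
    rw [sinmul, show 2*π*(2*x-3*y) - 2*π*(x-2*y) = 2*π*(x-y) by ring,
      show 2*π*(2*x-3*y) + 2*π*(x-2*y) = -(2*π*(-3*x+5*y)) by ring, Real.cos_neg]
  linear_combination (16*π^2)*e1 - (16*π^2)*e2 - (32*π^2)*e3 + (16*π^2)*e4 +
    (32*π^2)*e5 + (16*π^2)*e6 + (32*π^2)*e7 + (16*π^2)*e8 - (16*π^2)*e9

/-- The `X`-transform of `G₂` is differentiable and the absolute value of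
its Jacobian determinant equals `4π²·|S_ρ|`. -/
theorem jacobian_G2 :
    Differentiable ℝ Xmap ∧
    ∀ a : ℝ × ℝ, |(fderiv ℝ Xmap a).det| = 4 * π ^ 2 * |Srho a| := by
  constructor
  · exact fun a => (hXmap a).differentiableAt
  · intro a
    rw [(hXmap a).fderiv]
    have hdet : (Lmap a).det = PP a * SS a - QQ a * RR a := det_formula _ _ _ _
    have hk : PP a * SS a - QQ a * RR a = -(4*π^2) * Srho a := by
      simpa [PP, QQ, RR, SS, Srho] using key a.1 a.2
    rw [hdet, hk, abs_mul, abs_neg]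
    have hπ : (0:ℝ) < 4 * π ^ 2 := by positivity
    rw [abs_of_pos hπ]

end
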